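/- If a pair (X,Y) of Banach spaces satisfies the compact perturbation property for minimum modulus (CPPm), then the set of minimum modulus-attaining operators is dense in L(X,Y). -/

import Mathlib

open Filter Topology

noncomputable def minMod {X Y : Type*} [NormedAddCommGroup X] [NormedSpace ℝ X]
    [NormedAddCommGroup Y] [NormedSpace ℝ Y] (T : X →L[ℝ] Y) : ℝ :=
  sInf {r : ℝ | ∃ x : X, ‖x‖ = 1 ∧ ‖T x‖ = r}

def WeaklyNull {X : Type*} [NormedAddCommGroup X] [NormedSpace ℝ X] (x : ℕ → X) : Prop :=
  ∀ f : X →L[ℝ] ℝ, Tendsto (fun n => f (x n)) atTop (𝓝 0)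

def AttainsMinMod {X Y : Type*} [NormedAddCommGroup X] [NormedSpace ℝ X]
    [NormedAddCommGroup Y] [NormedSpace ℝ Y] (T : X →L[ℝ] Y) : Prop :=
  ∃ x : X, ‖x‖ = 1 ∧ ‖T x‖ = minMod T

def PairPropM (X Y : Type*) [NormedAddCommGroup X] [NormedSpace ℝ X]
    [NormedAddCommGroup Y] [NormedSpace ℝ Y] : Prop :=
  ∀ T : X →L[ℝ] Y, 1 ≤ minMod T →
    ∀ (x : X) (y : Y), ‖x‖ ≤ ‖y‖ → ∀ xs : ℕ → X, WeaklyNull xs →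
      limsup (fun n => ‖x + xs n‖) atTop ≤ limsup (fun n => ‖y + T (xs n)‖) atTop

def PairPropO (X Y : Type*) [NormedAddCommGroup X] [NormedSpace ℝ X]
    [NormedAddCommGroup Y] [NormedSpace ℝ Y] : Prop :=
  ∀ T : X →L[ℝ] Y, 1 ≤ minMod T →
    ∀ y : Y, y ≠ 0 → ∀ xs : ℕ → X, WeaklyNull xs →
      limsup (fun n => ‖xs n‖) atTop < limsup (fun n => ‖y + T (xs n)‖) atTop

def PropertyM (X : Type*) [NormedAddCommGroup X] [NormedSpace ℝ X] : Prop :=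
  ∀ x y : X, ‖y‖ ≤ ‖x‖ → ∀ xs : ℕ → X, WeaklyNull xs →
    limsup (fun n => ‖y + xs n‖) atTop ≤ limsup (fun n => ‖x + xs n‖) atTop

def OpialProperty (X : Type*) [NormedAddCommGroup X] [NormedSpace ℝ X] : Prop :=
  ∀ x : X, x ≠ 0 → ∀ xs : ℕ → X, WeaklyNull xs →
    limsup (fun n => ‖xs n‖) atTop < limsup (fun n => ‖x + xs n‖) atTop

def WeakMinimizingProperty (X Y : Type*) [NormedAddCommGroup X] [NormedSpace ℝ X]
    [NormedAddCommGroup Y] [NormedSpace ℝ Y] : Prop :=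
  ∀ T : X →L[ℝ] Y,
    (∃ xs : ℕ → X, (∀ n, ‖xs n‖ = 1) ∧
      Tendsto (fun n => ‖T (xs n)‖) atTop (𝓝 (minMod T)) ∧ ¬ WeaklyNull xs) →
    AttainsMinMod T

section aux
variable {X Y : Type*} [NormedAddCommGroup X] [NormedSpace ℝ X]
    [NormedAddCommGroup Y] [NormedSpace ℝ Y]

lemma mm_bddBelow (T : X →L[ℝ] Y) :
    BddBelow {r : ℝ | ∃ x : X, ‖x‖ = 1 ∧ ‖T x‖ = r} :=
  ⟨0, by rintro r ⟨x, hx, rfl⟩; exact norm_nonneg _⟩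

lemma exists_unit (X : Type*) [NormedAddCommGroup X] [NormedSpace ℝ X] [Nontrivial X] :
    ∃ x : X, ‖x‖ = 1 := by
  obtain ⟨x, hx⟩ := exists_ne (0 : X)
  have h : ‖x‖ ≠ 0 := by simpa using hx
  exact ⟨‖x‖⁻¹ • x, by rw [norm_smul, norm_inv, norm_norm, inv_mul_cancel₀ h]⟩

lemma mm_nonempty [Nontrivial X] (T : X →L[ℝ] Y) :
    {r : ℝ | ∃ x : X, ‖x‖ = 1 ∧ ‖T x‖ = r}.Nonempty := by
  obtain ⟨x, hx⟩ := exists_unit X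
  exact ⟨‖T x‖, x, hx, rfl⟩

lemma minMod_nonneg [Nontrivial X] (T : X →L[ℝ] Y) : 0 ≤ minMod T :=
  le_csInf (mm_nonempty T) (by rintro r ⟨x, hx, rfl⟩; exact norm_nonneg _)

lemma minMod_le (T : X →L[ℝ] Y) {x : X} (hx : ‖x‖ = 1) : minMod T ≤ ‖T x‖ :=
  csInf_le (mm_bddBelow T) ⟨x, hx, rfl⟩

lemma exists_lt [Nontrivial X] (T : X →L[ℝ] Y) {b : ℝ} (hb : minMod T < b) :
    ∃ x : X, ‖x‖ = 1 ∧ ‖T x‖ < b := by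
  obtain ⟨r, ⟨x, hx, rfl⟩, hr⟩ := (csInf_lt_iff (mm_bddBelow T) (mm_nonempty T)).mp hb
  exact ⟨x, hx, hr⟩

lemma rankOne_compact (g : X →L[ℝ] ℝ) (y : Y) :
    IsCompactOperator ⇑(g.smulRight y) := by
  refine ⟨(fun t : ℝ => t • y) '' Set.Icc (-‖g‖) ‖g‖,
    (isCompact_Icc.image (by continuity)), ?_⟩
  filter_upwards [Metric.closedBall_mem_nhds (0 : X) one_pos] with x hx
  refine ⟨g x, ?_, rfl⟩
  have hx1 : ‖x‖ ≤ 1 := by simpa using hx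
  have := g.le_opNorm x
  have habs : |g x| ≤ ‖g‖ := by
    calc |g x| = ‖g x‖ := (Real.norm_eq_abs _).symm
    _ ≤ ‖g‖ * ‖x‖ := g.le_opNorm x
    _ ≤ ‖g‖ * 1 := by nlinarith [norm_nonneg g]
    _ = ‖g‖ := mul_one _
  exact abs_le.mp habs |>.imp id id |> fun h => ⟨h.1, h.2⟩

/-- If the min modulus is below η, we can kill it with a perturbation of size < η. -/
lemma kill [Nontrivial X] (T : X →L[ℝ] Y) {η : ℝ} (h : minMod T < η) :
    ∃ S : X →L[ℝ] Y, AttainsMinMod S ∧ ‖T - S‖ < η := by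
  obtain ⟨x, hx, hTx⟩ := exists_lt T h
  have hxne : x ≠ 0 := by intro h0; rw [h0] at hx; simp at hx
  obtain ⟨g, hg1, hg2⟩ := exists_dual_vector ℝ x (norm_ne_zero_iff.mpr hxne)
  have hgx : g x = 1 := by rw [hg2, hx]; norm_num
  set K : X →L[ℝ] Y := g.smulRight (T x) with hK
  refine ⟨T - K, ⟨x, hx, ?_⟩, ?_⟩
  · have hTKx : (T - K) x = 0 := by
      simp [hK, ContinuousLinearMap.smulRight_apply, hgx]
    have h0 : minMod (T - K) = 0 := by
      refine le_antisymm ?_ (minMod_nonneg _)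
      calc minMod (T - K) ≤ ‖(T - K) x‖ := minMod_le _ hx
      _ = 0 := by rw [hTKx, norm_zero]
    rw [hTKx, norm_zero, h0]
  · have : T - (T - K) = K := by abel
    rw [this]
    have hKnorm : ‖K‖ = ‖T x‖ := by
      rw [hK, ContinuousLinearMap.norm_smulRight_apply, hg1, one_mul]
    rw [hKnorm]; exact hTx

end aux

theorem stmt1 {X Y : Type*} [NormedAddCommGroup X] [NormedSpace ℝ X] [CompleteSpace X]
    [NormedAddCommGroup Y] [NormedSpace ℝ Y] [CompleteSpace Y] [Nontrivial X]
    (hCPPm : ∀ T : X →L[ℝ] Y, ¬ AttainsMinMod T →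
      sSup {r : ℝ | ∃ K : X →L[ℝ] Y, IsCompactOperator ⇑K ∧ r = minMod (T + K)} = minMod T) :
    ∀ T : X →L[ℝ] Y, ∀ ε : ℝ, 0 < ε → ∃ S : X →L[ℝ] Y, AttainsMinMod S ∧ ‖T - S‖ < ε := by
  intro T ε hε
  by_cases hsmall : minMod T < ε
  · exact kill T hsmall
  push_neg at hsmall
  set m := minMod T with hm
  have hm0 : 0 < m := lt_of_lt_of_le hε hsmall
  by_cases hA : AttainsMinMod T
  · exact ⟨T, hA, by simpa using hε⟩
  obtain ⟨x, hx, hTx⟩ := exists_lt T (show m < m + ε / 4 by linarith)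
  have hTxm : m ≤ ‖T x‖ := minMod_le T hx
  have hTxpos : 0 < ‖T x‖ := lt_of_lt_of_le hm0 hTxm
  have hxne : x ≠ 0 := by intro h0; rw [h0] at hx; simp at hx
  obtain ⟨g, hg1, hg2⟩ := exists_dual_vector ℝ x (norm_ne_zero_iff.mpr hxne)
  have hgx : g x = 1 := by rw [hg2, hx]; norm_num
  set c : ℝ := m - ε / 4 with hc
  have hc0 : 0 < c := by have := hε; have := hsmall; simp only [hc]; linarith
  have hcm : c < m := by simp only [hc]; linarith
  set z : Y := (1 - c / ‖T x‖) • (T x) with hz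
  set K : X →L[ℝ] Y := g.smulRight z with hKdef
  set S : X →L[ℝ] Y := T - K with hS
  have hSx : S x = (c / ‖T x‖) • T x := by
    have h1 : S x = T x - (1 - c / ‖T x‖) • T x := by
      simp [hS, hKdef, hz, ContinuousLinearMap.smulRight_apply, hgx]
    rw [h1]; module
  have hcle : c / ‖T x‖ ≤ 1 := (div_le_one hTxpos).mpr (le_trans hcm.le hTxm)
  have hSxnorm : ‖S x‖ = c := by
    rw [hSx, norm_smul, Real.norm_of_nonneg (div_nonneg hc0.le hTxpos.le),
      div_mul_cancel₀ _ (ne_of_gt hTxpos)]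
  have hznorm : ‖z‖ = ‖T x‖ - c := by
    rw [hz, norm_smul, Real.norm_of_nonneg (by linarith : (0:ℝ) ≤ 1 - c / ‖T x‖)]
    field_simp
  have hKnorm : ‖K‖ < ε / 2 := by
    rw [hKdef, ContinuousLinearMap.norm_smulRight_apply, hg1, one_mul, hznorm]
    linarith
  have hTS : ‖T - S‖ < ε / 2 := by
    have h2 : T - S = K := by rw [hS]; abel
    rw [h2]; exact hKnorm
  have hmS_le : minMod S ≤ c := hSxnorm ▸ minMod_le S hx
  by_cases hAS : AttainsMinMod S
  · exact ⟨S, hAS, lt_trans hTS (by linarith)⟩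
  · have hsup := hCPPm S hAS
    have hmem : m ∈ {r : ℝ | ∃ K' : X →L[ℝ] Y, IsCompactOperator ⇑K' ∧ r = minMod (S + K')} := by
      refine ⟨K, rankOne_compact g z, ?_⟩
      have h3 : S + K = T := by rw [hS]; abel
      rw [h3]
    by_cases hbdd : BddAbove {r : ℝ | ∃ K' : X →L[ℝ] Y, IsCompactOperator ⇑K' ∧ r = minMod (S + K')}
    · exfalso
      have h4 : m ≤ sSup {r : ℝ | ∃ K' : X →L[ℝ] Y, IsCompactOperator ⇑K' ∧ r = minMod (S + K')} :=
        le_csSup hbdd hmem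
      rw [hsup] at h4
      linarith
    · have h0 : sSup {r : ℝ | ∃ K' : X →L[ℝ] Y, IsCompactOperator ⇑K' ∧ r = minMod (S + K')} = 0 :=
        Real.sSup_of_not_bddAbove hbdd
      have hmS0 : minMod S = 0 := by rw [← hsup, h0]
      have hlt : minMod S < ε - ‖T - S‖ := by rw [hmS0]; linarith
      obtain ⟨S', hS', hd⟩ := kill S hlt
      refine ⟨S', hS', ?_⟩
      calc ‖T - S'‖ = ‖(T - S) + (S - S')‖ := by abel_nf
        _ ≤ ‖T - S‖ + ‖S - S'‖ := norm_add_le _ _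
        _ < ε := by linarith
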